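/- Let g : ℝ⁶ \ {0} → ℝ be given by g(x) = (x₅² − x₄²)/‖x‖². For every x ≠ 0, the (Fréchet) derivative of g vanishes at x if and only if one of the following holds: (x₄ = 0 and x₅ = 0), or (xᵢ = 0 for all i ≠ 4), or (xᵢ = 0 for all i ≠ 5). In other words, the critical set of g is exactly the union of the three eigenspaces (minus the origin) of the diagonal matrix diag(0,0,0,0,−1,1). -/

import Mathlib

theorem critical_set_of_g
    (g : EuclideanSpace ℝ (Fin 6) → ℝ)
    (hg : ∀ x, g x = (x 5 ^ 2 - x 4 ^ 2) / ‖x‖ ^ 2)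
    (x : EuclideanSpace ℝ (Fin 6)) (hx : x ≠ 0) :
    fderiv ℝ g x = 0 ↔
      (x 4 = 0 ∧ x 5 = 0) ∨ (∀ i, i ≠ 4 → x i = 0) ∨ (∀ i, i ≠ 5 → x i = 0) := by
  obtain ⟨N, hNdef⟩ : ∃ N : ℝ, N = ‖x‖ ^ 2 := ⟨_, rfl⟩
  obtain ⟨c, hcdef⟩ : ∃ c : ℝ, c = x 5 ^ 2 - x 4 ^ 2 := ⟨_, rfl⟩
  have hN : (0:ℝ) < N := by
    have : ‖x‖ ≠ 0 := norm_ne_zero_iff.mpr hx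
    rw [hNdef]; positivity
  have hN0 : N ≠ 0 := hN.ne'
  obtain ⟨D, hDdef⟩ : ∃ D : EuclideanSpace ℝ (Fin 6) →L[ℝ] ℝ,
      D = (-(2*c)/N^2) • (innerSL ℝ x)
        + (2 * x 5 / N) • (EuclideanSpace.proj (5 : Fin 6) : EuclideanSpace ℝ (Fin 6) →L[ℝ] ℝ)
        + (-(2 * x 4) / N) • (EuclideanSpace.proj (4 : Fin 6) : EuclideanSpace ℝ (Fin 6) →L[ℝ] ℝ) :=
    ⟨_, rfl⟩
  have h5' := (EuclideanSpace.proj (5 : Fin 6) : EuclideanSpace ℝ (Fin 6) →L[ℝ] ℝ).hasFDerivAt (x := x)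
  have h4' := (EuclideanSpace.proj (4 : Fin 6) : EuclideanSpace ℝ (Fin 6) →L[ℝ] ℝ).hasFDerivAt (x := x)
  have h5 : HasFDerivAt (fun y : EuclideanSpace ℝ (Fin 6) => y 5)
      (EuclideanSpace.proj (5 : Fin 6) : EuclideanSpace ℝ (Fin 6) →L[ℝ] ℝ) x := h5'
  have h4 : HasFDerivAt (fun y : EuclideanSpace ℝ (Fin 6) => y 4)
      (EuclideanSpace.proj (4 : Fin 6) : EuclideanSpace ℝ (Fin 6) →L[ℝ] ℝ) x := h4'
  have hq := (h5.mul h5).sub (h4.mul h4)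
  have hn : HasFDerivAt (fun y : EuclideanSpace ℝ (Fin 6) => ‖y‖ ^ 2)
      (2 • (innerSL ℝ x)) x := by simpa using (hasFDerivAt_id x).norm_sq
  have hinv : HasFDerivAt (fun y : EuclideanSpace ℝ (Fin 6) => (‖y‖ ^ 2)⁻¹)
      ((-(N^2)⁻¹) • (2 • (innerSL ℝ x))) x := by
    rw [hNdef]
    exact (hasDerivAt_inv (by rw [hNdef] at hN0; exact hN0)).comp_hasFDerivAt x hn
  have hmul := hq.mul hinv
  have hgfun : g = fun y : EuclideanSpace ℝ (Fin 6) =>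
      (y 5 * y 5 - y 4 * y 4) * (‖y‖ ^ 2)⁻¹ := funext fun y => by rw [hg, div_eq_mul_inv, sq, sq]
  have hD : HasFDerivAt g D x := by
    rw [hgfun]
    refine hmul.congr_fderiv ?_
    rw [hDdef]
    ext v
    simp only [ContinuousLinearMap.add_apply, ContinuousLinearMap.smul_apply,
      ContinuousLinearMap.coe_smul', Pi.smul_apply, ContinuousLinearMap.sub_apply,
      smul_eq_mul, innerSL_apply_apply, Pi.sub_apply, Pi.mul_apply, ← hNdef, hcdef]
    field_simp
    ring
  have hfd : fderiv ℝ g x = D := hD.fderiv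
  rw [hfd]
  have hNs : N = x 0^2 + x 1^2 + x 2^2 + x 3^2 + x 4^2 + x 5^2 := by
    rw [hNdef, EuclideanSpace.norm_eq, Real.sq_sqrt (by positivity)]
    simp [Fin.sum_univ_six, Real.norm_eq_abs, sq_abs]
  have hinner : ∀ v : EuclideanSpace ℝ (Fin 6),
      (inner ℝ x v : ℝ) = x 0 * v 0 + x 1 * v 1 + x 2 * v 2 + x 3 * v 3 + x 4 * v 4 + x 5 * v 5 := by
    intro v
    simp [PiLp.inner_apply, RCLike.inner_apply, Fin.sum_univ_six]
    ring
  have hev : ∀ i : Fin 6, D (EuclideanSpace.single i 1)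
      = -(2*c)/N^2 * x i + (2 * x 5 / N) * (EuclideanSpace.single i (1:ℝ) 5)
        + (-(2 * x 4)/N) * (EuclideanSpace.single i (1:ℝ) 4) := by
    intro i
    rw [hDdef]
    simp only [ContinuousLinearMap.add_apply, ContinuousLinearMap.smul_apply,
      smul_eq_mul, innerSL_apply_apply, EuclideanSpace.inner_single_right, conj_trivial]
    simp [mul_comm]
  clear hq hmul hinv hn h4 h5 h4' h5' hD hgfun hg hfd
  constructor
  · intro h
    have key : ∀ i : Fin 6, D (EuclideanSpace.single i 1) = 0 := fun i => by
      rw [h]; rfl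
    have keq : ∀ i : Fin 6,
        -(2*c)/N^2 * x i + (2 * x 5 / N) * (EuclideanSpace.single i (1:ℝ) 5)
          + (-(2 * x 4)/N) * (EuclideanSpace.single i (1:ℝ) 4) = 0 :=
      fun i => (hev i).symm.trans (key i)
    have E0 : c * x 0 = 0 := by
      have h1 := keq 0
      simp [EuclideanSpace.single_apply] at h1
      rcases h1 with (h' | h') | h'
      · rw [h']; ring
      · exact absurd h' hN0
      · rw [h']; ring
    have E1 : c * x 1 = 0 := by
      have h1 := keq 1
      simp [EuclideanSpace.single_apply] at h1
      rcases h1 with (h' | h') | h'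
      · rw [h']; ring
      · exact absurd h' hN0
      · rw [h']; ring
    have E2 : c * x 2 = 0 := by
      have h1 := keq 2
      simp [EuclideanSpace.single_apply] at h1
      rcases h1 with (h' | h') | h'
      · rw [h']; ring
      · exact absurd h' hN0
      · rw [h']; ring
    have E3 : c * x 3 = 0 := by
      have h1 := keq 3
      simp [EuclideanSpace.single_apply] at h1
      rcases h1 with (h' | h') | h'
      · rw [h']; ring
      · exact absurd h' hN0
      · rw [h']; ring
    have E4 : x 4 * (c + N) = 0 := by
      have h1 := keq 4
      simp [EuclideanSpace.single_apply] at h1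
      field_simp at h1
      have h2 : N * (x 4 * (c + N)) = 0 := by linear_combination (-N/2) * h1
      exact (mul_eq_zero.mp h2).resolve_left hN0
    have E5 : x 5 * (N - c) = 0 := by
      have h1 := keq 5
      simp [EuclideanSpace.single_apply] at h1
      field_simp at h1
      have h2 : N * (x 5 * (N - c)) = 0 := by linear_combination (N/2) * h1
      exact (mul_eq_zero.mp h2).resolve_left hN0
    by_cases hc : c = 0
    · left
      rw [hc, zero_add] at E4
      rw [hc, sub_zero] at E5
      exact ⟨by rcases mul_eq_zero.mp E4 with h'|h'; exact h'; exact absurd h' hN0,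
        by rcases mul_eq_zero.mp E5 with h'|h'; exact h'; exact absurd h' hN0⟩
    · have z0 : x 0 = 0 := by rcases mul_eq_zero.mp E0 with h'|h'; exact absurd h' hc; exact h'
      have z1 : x 1 = 0 := by rcases mul_eq_zero.mp E1 with h'|h'; exact absurd h' hc; exact h'
      have z2 : x 2 = 0 := by rcases mul_eq_zero.mp E2 with h'|h'; exact absurd h' hc; exact h'
      have z3 : x 3 = 0 := by rcases mul_eq_zero.mp E3 with h'|h'; exact absurd h' hc; exact h'
      have hN45 : N = x 4 ^ 2 + x 5 ^ 2 := by rw [hNs, z0, z1, z2, z3]; ring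
      have E4' : x 4 * x 5 ^ 2 = 0 := by
        have : x 4 * (c + N) = x 4 * (2 * x 5 ^ 2) := by rw [hcdef, hN45]; ring
        rw [this] at E4; linarith [E4]
      have E5' : x 5 * x 4 ^ 2 = 0 := by
        have : x 5 * (N - c) = x 5 * (2 * x 4 ^ 2) := by rw [hcdef, hN45]; ring
        rw [this] at E5; linarith [E5]
      by_cases h4z : x 4 = 0
      · right; right
        intro i hi
        fin_cases i
        · exact z0
        · exact z1
        · exact z2
        · exact z3
        · exact h4z
        · exact absurd rfl hi
      · have h5z : x 5 = 0 := by
          rcases mul_eq_zero.mp E5' with h'|h'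
          · exact h'
          · exact absurd (pow_eq_zero_iff (n := 2) (by norm_num) |>.mp h') h4z
        right; left
        intro i hi
        fin_cases i
        · exact z0
        · exact z1
        · exact z2
        · exact z3
        · exact absurd rfl hi
        · exact h5z
  · intro h
    have hx45 : ∀ v : EuclideanSpace ℝ (Fin 6), D v = 0 := by
      intro v
      rw [hDdef]
      simp only [ContinuousLinearMap.add_apply, ContinuousLinearMap.smul_apply,
        smul_eq_mul, innerSL_apply_apply, EuclideanSpace.coe_proj]
      rcases h with ⟨h4z, h5z⟩ | hmid | hright
      · rw [hcdef, h4z, h5z]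
        ring
      · have z0 := hmid 0 (by decide)
        have z1 := hmid 1 (by decide)
        have z2 := hmid 2 (by decide)
        have z3 := hmid 3 (by decide)
        have z5 := hmid 5 (by decide)
        have h4z : x 4 ≠ 0 := by
          intro h4z
          apply hx
          ext i
          fin_cases i
          · exact z0
          · exact z1
          · exact z2
          · exact z3
          · exact h4z
          · exact z5
        have hN4 : N = x 4 ^ 2 := by rw [hNs, z0, z1, z2, z3, z5]; ring
        rw [hinner v, hcdef, z0, z1, z2, z3, z5, hN4]
        field_simp
        ring
      · have z0 := hright 0 (by decide)
        have z1 := hright 1 (by decide)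
        have z2 := hright 2 (by decide)
        have z3 := hright 3 (by decide)
        have z4 := hright 4 (by decide)
        have h5z : x 5 ≠ 0 := by
          intro h5z
          apply hx
          ext i
          fin_cases i
          · exact z0
          · exact z1
          · exact z2
          · exact z3
          · exact z4
          · exact h5z
        have hN5 : N = x 5 ^ 2 := by rw [hNs, z0, z1, z2, z3, z4]; ring
        rw [hinner v, hcdef, z0, z1, z2, z3, z4, hN5]
        field_simp
        ring
    exact ContinuousLinearMap.ext hx45
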